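/- Let φ = (1+√5)/2. If p, p' ∈ [0,1] are reals satisfying p ≥ (φ/r - 1)/(φ - 1), p' ≤ (2 - 2/r)/(2 - φ), and p'(φ-1) + 1 - pφ ≥ 0 for some real r > 1, then r ≥ (5√5 - 9)/2. -/

import Mathlib

theorem stmt_5 (p p' r : ℝ) (hp0 : 0 ≤ p) (hp1 : p ≤ 1) (hp'0 : 0 ≤ p') (hp'1 : p' ≤ 1)
    (hr : 1 < r)
    (h1 : p ≥ (((1 + Real.sqrt 5)/2) / r - 1) / ((1 + Real.sqrt 5)/2 - 1))
    (h2 : p' ≤ (2 - 2/r) / (2 - (1 + Real.sqrt 5)/2))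
    (h3 : p' * ((1 + Real.sqrt 5)/2 - 1) + 1 - p * ((1 + Real.sqrt 5)/2) ≥ 0) :
    r ≥ (5 * Real.sqrt 5 - 9) / 2 := by
  set s := Real.sqrt 5 with hs
  have hs2 : s ^ 2 = 5 := Real.sq_sqrt (by norm_num)
  have hs_lb : (2:ℝ) < s := by
    nlinarith [Real.sqrt_nonneg 5, hs2]
  have hs_ub : s < 3 := by
    nlinarith [Real.sqrt_nonneg 5, hs2]
  have hr0 : (0:ℝ) < r := by linarith
  -- clear denominators in h1
  have h1' : p * ((1 + s)/2 - 1) * r ≥ (1 + s)/2 - r := by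
    have hd : (0:ℝ) < (1 + s)/2 - 1 := by linarith
    rw [ge_iff_le, div_le_iff₀ hd] at h1
    have := h1
    rw [div_sub' (ne_of_gt hr0), div_le_iff₀ hr0] at this
    nlinarith [this]
  have h2' : p' * (2 - (1 + s)/2) * r ≤ 2 * r - 2 := by
    have hd : (0:ℝ) < 2 - (1 + s)/2 := by linarith
    rw [le_div_iff₀ hd] at h2
    have : (2 - 2/r) * r = 2 * r - 2 := by field_simp
    nlinarith [h2]
  nlinarith [h1', h2', h3, mul_nonneg hp'0 (le_of_lt hr0), hr0, hs2,
    mul_le_mul_of_nonneg_right h3 (le_of_lt hr0)]
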